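/- Let $\mathfrak{b}=\mathfrak{b}_1\mathfrak{b}_2$ with $\gcd(\mathrm{N}\mathfrak{b}_1,\mathrm{N}\mathfrak{b}_2)=1$. Then $S_\mathfrak{b}(N;\mathbf{0})=S_{\mathfrak{b}_1}(N;\mathbf{0})\,S_{\mathfrak{b}_2}(N;\mathbf{0})$; i.e. the complete sum $S_\mathfrak{b}(N;\mathbf{0})$ is multiplicative over norm-coprime factorisations. -/

import Mathlib

open NumberField
open scoped BigOperators

/-- The action of `Gal(K/ℚ)` on the ring of integers of `K`. -/
noncomputable def gact (K : Type*) [Field K] [NumberField K]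
    (τ : K ≃ₐ[ℚ] K) : (𝓞 K) ≃ₐ[ℤ] (𝓞 K) :=
  galRestrict ℤ ℚ K (𝓞 K) τ

/-- The generalised quadratic form attached to a symmetric coefficient tuple
`c : Fin n → Fin n → Gal(K/ℚ) → Gal(K/ℚ) → 𝓞 K`. -/
noncomputable def gqf {K : Type*} [Field K] [NumberField K] {n : ℕ}
    (c : Fin n → Fin n → (K ≃ₐ[ℚ] K) → (K ≃ₐ[ℚ] K) → 𝓞 K)
    (x : Fin n → 𝓞 K) : 𝓞 K :=
  ∑ i, ∑ j, ∑ τ : K ≃ₐ[ℚ] K, ∑ τ' : K ≃ₐ[ℚ] K,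
    c i j τ τ' * gact K τ (x i) * gact K τ' (x j)

/-- The generalised bilinear form attached to `c`. -/
noncomputable def gbf {K : Type*} [Field K] [NumberField K] {n : ℕ}
    (c : Fin n → Fin n → (K ≃ₐ[ℚ] K) → (K ≃ₐ[ℚ] K) → 𝓞 K)
    (x y : Fin n → 𝓞 K) : 𝓞 K :=
  ∑ i, ∑ j, ∑ τ : K ≃ₐ[ℚ] K, ∑ τ' : K ≃ₐ[ℚ] K,
    c i j τ τ' * gact K τ (x i) * gact K τ' (y j)

/-- The `G`-invariant ideal `ᴳ𝔟 = ⋂_{τ ∈ G} 𝔟^{τ⁻¹}`. -/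
noncomputable def GIdeal {K : Type*} [Field K] [NumberField K]
    (G : Set (K ≃ₐ[ℚ] K)) (𝔟 : Ideal (𝓞 K)) : Ideal (𝓞 K) :=
  ⨅ τ ∈ G, Ideal.map (gact K τ.symm) 𝔟

lemma gbf_add_right {K : Type*} [Field K] [NumberField K] {n : ℕ}
    (c : Fin n → Fin n → (K ≃ₐ[ℚ] K) → (K ≃ₐ[ℚ] K) → 𝓞 K)
    (a x y : Fin n → 𝓞 K) : gbf c a (x + y) = gbf c a x + gbf c a y := by
  simp [gbf, Pi.add_apply, map_add, mul_add, Finset.sum_add_distrib]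

lemma gbf_neg_right {K : Type*} [Field K] [NumberField K] {n : ℕ}
    (c : Fin n → Fin n → (K ≃ₐ[ℚ] K) → (K ≃ₐ[ℚ] K) → 𝓞 K)
    (a x : Fin n → 𝓞 K) : gbf c a (-x) = - gbf c a x := by
  simp [gbf, Pi.neg_apply, map_neg, mul_neg, Finset.sum_neg_distrib]

/-- The subgroup `ℋ_𝔟 = {h ∈ 𝓞ⁿ : 2 B(a; h) ∈ 𝔟 ∀ a}`. -/
noncomputable def Hsub {K : Type*} [Field K] [NumberField K] {n : ℕ}
    (c : Fin n → Fin n → (K ≃ₐ[ℚ] K) → (K ≃ₐ[ℚ] K) → 𝓞 K)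
    (𝔟 : Ideal (𝓞 K)) : AddSubgroup (Fin n → 𝓞 K) where
  carrier := {h | ∀ a, 2 * gbf c a h ∈ 𝔟}
  zero_mem' := by
    intro a
    have : gbf c a (0 : Fin n → 𝓞 K) = 0 := by
      simp [gbf]
    simp [this]
  add_mem' := by
    intro x y hx hy a
    rw [gbf_add_right, mul_add]
    exact Ideal.add_mem _ (hx a) (hy a)
  neg_mem' := by
    intro x hx a
    rw [gbf_neg_right, mul_neg]
    exact (Ideal.neg_mem_iff _).mpr (hx a)

/-- The subgroup `(ᴳ𝔟)ⁿ ⊆ 𝓞ⁿ`. -/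
noncomputable def GIdealPow {K : Type*} [Field K] [NumberField K] (n : ℕ)
    (G : Set (K ≃ₐ[ℚ] K)) (𝔟 : Ideal (𝓞 K)) : AddSubgroup (Fin n → 𝓞 K) :=
  AddSubgroup.pi Set.univ fun _ => (GIdeal G 𝔟).toAddSubgroup

/-- `ψ(x) = exp(2πi Tr_{K/ℚ}(x))`. -/
noncomputable def psiK (K : Type*) [Field K] [NumberField K] (x : K) : ℂ :=
  Complex.exp (2 * Real.pi * Complex.I * ((Algebra.trace ℚ K x : ℚ) : ℂ))

/-- `σ : 𝓞 K → ℂ` is invariant under translation by the ideal `𝔟`. -/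
def IsCharModI {K : Type*} [Field K] [NumberField K] (𝔟 : Ideal (𝓞 K))
    (σ : 𝓞 K → ℂ) : Prop :=
  ∀ x z : 𝓞 K, z ∈ 𝔟 → σ (x + z) = σ x

/-- The set of primitive additive characters modulo `𝔟`. -/
def PrimChars (K : Type*) [Field K] [NumberField K] (𝔟 : Ideal (𝓞 K)) :
    Set (𝓞 K → ℂ) :=
  {σ | (σ 0 = 1 ∧ ∀ x y, σ (x + y) = σ x * σ y) ∧ IsCharModI 𝔟 σ ∧
    ∀ 𝔟₁ : Ideal (𝓞 K), 𝔟₁ ∣ 𝔟 → 𝔟₁ ≠ 𝔟 → ¬ IsCharModI 𝔟₁ σ}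

/-- The exponential sum
`S_𝔟(N; m) = ∑*_{σ mod 𝔟} ∑_{a mod ᴳ𝔟} σ(F(a) - N) ψ(m.a)`,
where `R` is a complete set of representatives modulo `(ᴳ𝔟)ⁿ`. -/
noncomputable def expSum {K : Type*} [Field K] [NumberField K] {n : ℕ}
    (c : Fin n → Fin n → (K ≃ₐ[ℚ] K) → (K ≃ₐ[ℚ] K) → 𝓞 K)
    (𝔟 : Ideal (𝓞 K)) (R : Finset (Fin n → 𝓞 K)) (N : 𝓞 K)
    (m : Fin n → K) : ℂ :=
  ∑ᶠ σ ∈ PrimChars K 𝔟, ∑ a ∈ R,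
    σ (gqf c a - N) * psiK K (∑ i, m i * ((a i : K)))


section AuxLemmas

variable {K : Type*} [Field K] [NumberField K]

lemma gact_intCast (τ : K ≃ₐ[ℚ] K) (r : ℤ) : gact K τ ((r : ℤ) : 𝓞 K) = r :=
  map_intCast _ r

lemma gact_symm_eq (τ : K ≃ₐ[ℚ] K) : gact K τ.symm = (gact K τ).symm := by
  show galRestrict ℤ ℚ K (𝓞 K) τ⁻¹ = ((galRestrict ℤ ℚ K (𝓞 K)) τ)⁻¹
  exact map_inv (galRestrict ℤ ℚ K (𝓞 K)) τ

lemma gact_gact_symm (τ : K ≃ₐ[ℚ] K) (x : 𝓞 K) : gact K τ (gact K τ.symm x) = x := by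
  rw [gact_symm_eq]; exact (gact K τ).apply_symm_apply x

lemma gact_symm_gact (τ : K ≃ₐ[ℚ] K) (x : 𝓞 K) : gact K τ.symm (gact K τ x) = x := by
  rw [gact_symm_eq]; exact (gact K τ).symm_apply_apply x

lemma mem_GIdeal_iff {G : Set (K ≃ₐ[ℚ] K)} {𝔟 : Ideal (𝓞 K)} {x : 𝓞 K} :
    x ∈ GIdeal G 𝔟 ↔ ∀ τ ∈ G, gact K τ x ∈ 𝔟 := by
  simp only [GIdeal, Ideal.mem_iInf]
  refine forall_congr' fun τ => forall_congr' fun hτ => ?_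
  rw [Ideal.mem_map_of_equiv (gact K τ.symm)]
  constructor
  · rintro ⟨z, hz, rfl⟩
    rw [gact_gact_symm]; exact hz
  · intro hz
    exact ⟨gact K τ x, hz, gact_symm_gact τ x⟩

lemma intCast_mem_GIdeal {G : Set (K ≃ₐ[ℚ] K)} {𝔟 : Ideal (𝓞 K)} {r : ℤ}
    (h : ((r : ℤ) : 𝓞 K) ∈ 𝔟) : ((r : ℤ) : 𝓞 K) ∈ GIdeal G 𝔟 := by
  rw [mem_GIdeal_iff]
  intro τ _
  rw [gact_intCast]
  exact h

lemma GIdeal_mono {G : Set (K ≃ₐ[ℚ] K)} {𝔟 𝔟' : Ideal (𝓞 K)} (h : 𝔟 ≤ 𝔟') :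
    GIdeal G 𝔟 ≤ GIdeal G 𝔟' := by
  intro x hx
  rw [mem_GIdeal_iff] at hx ⊢
  exact fun τ hτ => h (hx τ hτ)

lemma GIdeal_mul_mem {G : Set (K ≃ₐ[ℚ] K)} {𝔟₁ 𝔟₂ : Ideal (𝓞 K)} {x y : 𝓞 K}
    (hx : x ∈ GIdeal G 𝔟₁) (hy : y ∈ GIdeal G 𝔟₂) : x * y ∈ GIdeal G (𝔟₁ * 𝔟₂) := by
  rw [mem_GIdeal_iff] at hx hy ⊢
  intro τ hτ
  rw [map_mul]
  exact Ideal.mul_mem_mul (hx τ hτ) (hy τ hτ)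

/-- Congruence of the quadratic form modulo an ideal. -/
lemma gqf_congr {n : ℕ} {c : Fin n → Fin n → (K ≃ₐ[ℚ] K) → (K ≃ₐ[ℚ] K) → 𝓞 K}
    {G : Set (K ≃ₐ[ℚ] K)} (hG : ∀ i j τ τ', c i j τ τ' ≠ 0 → τ ∈ G ∧ τ' ∈ G)
    {𝔞 : Ideal (𝓞 K)} {x y : Fin n → 𝓞 K}
    (h : ∀ i, x i - y i ∈ GIdeal G 𝔞) : gqf c x - gqf c y ∈ 𝔞 := by
  rw [gqf, gqf, ← Finset.sum_sub_distrib]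
  refine Ideal.sum_mem _ fun i _ => ?_
  rw [← Finset.sum_sub_distrib]
  refine Ideal.sum_mem _ fun j _ => ?_
  rw [← Finset.sum_sub_distrib]
  refine Ideal.sum_mem _ fun τ _ => ?_
  rw [← Finset.sum_sub_distrib]
  refine Ideal.sum_mem _ fun τ' _ => ?_
  by_cases hc : c i j τ τ' = 0
  · simp [hc]
  · obtain ⟨hτ, hτ'⟩ := hG i j τ τ' hc
    have h1 : gact K τ' (x j) - gact K τ' (y j) ∈ 𝔞 := by
      rw [← map_sub]; exact mem_GIdeal_iff.mp (h j) τ' hτ'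
    have h2 : gact K τ (x i) - gact K τ (y i) ∈ 𝔞 := by
      rw [← map_sub]; exact mem_GIdeal_iff.mp (h i) τ hτ
    have key : c i j τ τ' * gact K τ (x i) * gact K τ' (x j) -
        c i j τ τ' * gact K τ (y i) * gact K τ' (y j) =
        (c i j τ τ' * gact K τ (x i)) * (gact K τ' (x j) - gact K τ' (y j)) +
        (gact K τ (x i) - gact K τ (y i)) * (c i j τ τ' * gact K τ' (y j)) := by ring
    rw [key]
    exact add_mem (Ideal.mul_mem_left _ _ h1) (Ideal.mul_mem_right _ _ h2)

lemma char_triv {𝔟 : Ideal (𝓞 K)} {σ : 𝓞 K → ℂ} (h0 : σ 0 = 1) (hI : IsCharModI 𝔟 σ)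
    {z : 𝓞 K} (hz : z ∈ 𝔟) : σ z = 1 := by
  have := hI 0 z hz
  rw [zero_add] at this
  rw [this, h0]

lemma isCharModI_of {𝔟 : Ideal (𝓞 K)} {σ : 𝓞 K → ℂ}
    (hadd : ∀ x y, σ (x + y) = σ x * σ y) (h : ∀ z ∈ 𝔟, σ z = 1) : IsCharModI 𝔟 σ :=
  fun x z hz => by rw [hadd, h z hz, mul_one]

lemma char_nsmul {σ : 𝓞 K → ℂ} (h0 : σ 0 = 1)
    (hadd : ∀ x y, σ (x + y) = σ x * σ y) (n : ℕ) (x : 𝓞 K) :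
    σ (n • x) = σ x ^ n := by
  induction n with
  | zero => simpa using h0
  | succ k ih => rw [succ_nsmul, hadd, ih, pow_succ]

/-- Primitive characters modulo a nonzero ideal form a finite set. -/
lemma primChars_finite {𝔟 : Ideal (𝓞 K)} (hb : 𝔟 ≠ ⊥) : (PrimChars K 𝔟).Finite := by
  classical
  letI := @Fintype.ofFinite _ (Ideal.finiteQuotientOfFreeOfNeBot 𝔟 hb)
  haveI : Finite (𝓞 K ⧸ 𝔟) := Finite.of_fintype _
  set m := Ideal.absNorm 𝔟 with hm
  have hm0 : 0 < m := Nat.pos_of_ne_zero (by simpa [hm, Ideal.absNorm_eq_zero_iff] using hb)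
  have hUfin : Set.Finite {z : ℂ | z ^ m = 1} := by
    refine (Polynomial.nthRoots m (1 : ℂ)).toFinset.finite_toSet.subset ?_
    intro z hz
    rw [Finset.mem_coe, Multiset.mem_toFinset, Polynomial.mem_nthRoots hm0]
    exact hz
  set rep : (𝓞 K ⧸ 𝔟) → 𝓞 K := Function.surjInv Ideal.Quotient.mk_surjective with hrepdef
  have hrep : ∀ q, Ideal.Quotient.mk 𝔟 (rep q) = q :=
    Function.surjInv_eq Ideal.Quotient.mk_surjective
  have hout : ∀ x : 𝓞 K, x - rep (Ideal.Quotient.mk 𝔟 x) ∈ 𝔟 := by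
    intro x
    rw [← Ideal.Quotient.eq, hrep]
  set Θ : (𝓞 K → ℂ) → ((𝓞 K ⧸ 𝔟) → ℂ) := fun σ q => σ (rep q) with hΘ
  have hval : ∀ σ ∈ PrimChars K 𝔟, ∀ x : 𝓞 K,
      σ x = σ (rep (Ideal.Quotient.mk 𝔟 x)) := by
    intro σ hσ x
    have h := hσ.2.1 (rep (Ideal.Quotient.mk 𝔟 x))
      (x - rep (Ideal.Quotient.mk 𝔟 x)) (hout x)
    rw [← h]
    congr 1
    ring
  have hinj : Set.InjOn Θ (PrimChars K 𝔟) := by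
    intro σ hσ σ' hσ' h
    funext x
    rw [hval σ hσ x, hval σ' hσ' x]
    exact congrFun h (Ideal.Quotient.mk 𝔟 x)
  refine Set.Finite.of_finite_image ?_ hinj
  have himg : Θ '' PrimChars K 𝔟 ⊆
      Set.pi Set.univ (fun _ : 𝓞 K ⧸ 𝔟 => {z : ℂ | z ^ m = 1}) := by
    rintro _ ⟨σ, hσ, rfl⟩
    intro q _
    have h0 := hσ.1.1
    have hadd := hσ.1.2
    show σ (rep q) ^ m = 1
    rw [← char_nsmul h0 hadd]
    refine char_triv h0 hσ.2.1 ?_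
    rw [nsmul_eq_mul]
    exact Ideal.mul_mem_right _ _ (by exact_mod_cast Ideal.absNorm_mem 𝔟)
  exact (Set.Finite.pi fun _ => hUfin).subset himg

/-- Product of primitive characters is primitive modulo the product ideal. -/
lemma primChars_mul {𝔟₁ 𝔟₂ : Ideal (𝓞 K)} {e₁ e₂ : 𝓞 K}
    (he₁ : e₁ ∈ 𝔟₁) (he₂ : e₂ ∈ 𝔟₂) (hsum : e₁ + e₂ = 1)
    {σ₁ σ₂ : 𝓞 K → ℂ} (h₁ : σ₁ ∈ PrimChars K 𝔟₁) (h₂ : σ₂ ∈ PrimChars K 𝔟₂) :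
    σ₁ * σ₂ ∈ PrimChars K (𝔟₁ * 𝔟₂) := by
  obtain ⟨⟨h₁0, h₁add⟩, h₁char, h₁prim⟩ := h₁
  obtain ⟨⟨h₂0, h₂add⟩, h₂char, h₂prim⟩ := h₂
  have hmul0 : (σ₁ * σ₂) 0 = 1 := by simp [h₁0, h₂0]
  have hmuladd : ∀ x y, (σ₁ * σ₂) (x + y) = (σ₁ * σ₂) x * (σ₁ * σ₂) y := by
    intro x y
    simp only [Pi.mul_apply, h₁add, h₂add]
    ring
  have hsuptop : 𝔟₁ ⊔ 𝔟₂ = ⊤ := by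
    rw [Ideal.eq_top_iff_one, ← hsum]
    exact Submodule.add_mem_sup he₁ he₂
  refine ⟨⟨hmul0, hmuladd⟩, ?_, ?_⟩
  · refine isCharModI_of hmuladd fun z hz => ?_
    have hz₁ : z ∈ 𝔟₁ := Ideal.mul_le_left hz
    have hz₂ : z ∈ 𝔟₂ := Ideal.mul_le_right hz
    show σ₁ z * σ₂ z = 1
    rw [char_triv h₁0 h₁char hz₁, char_triv h₂0 h₂char hz₂, mul_one]
  · intro 𝔟' hdvd hne hchar
    have htriv' : ∀ z ∈ 𝔟', σ₁ z * σ₂ z = 1 := fun z hz =>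
      char_triv hmul0 hchar hz
    have hσ₁triv : ∀ z ∈ 𝔟', σ₁ z = 1 := by
      intro z hz
      have hz' : z = e₁ * z + e₂ * z := by linear_combination (-z) * hsum
      have step1 : σ₁ z = σ₁ (e₂ * z) := by
        conv_lhs => rw [hz']
        rw [h₁add, char_triv h₁0 h₁char (Ideal.mul_mem_right _ _ he₁), one_mul]
      have step2 : σ₂ (e₂ * z) = 1 :=
        char_triv h₂0 h₂char (Ideal.mul_mem_right _ _ he₂)
      have step3 : σ₁ (e₂ * z) * σ₂ (e₂ * z) = 1 :=
        htriv' _ (Ideal.mul_mem_left _ _ hz)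
      rw [step1, ← step3, step2, mul_one]
    have hσ₂triv : ∀ z ∈ 𝔟', σ₂ z = 1 := by
      intro z hz
      have hz' : z = e₂ * z + e₁ * z := by linear_combination (-z) * hsum
      have step1 : σ₂ z = σ₂ (e₁ * z) := by
        conv_lhs => rw [hz']
        rw [h₂add, char_triv h₂0 h₂char (Ideal.mul_mem_right _ _ he₂), one_mul]
      have step2 : σ₁ (e₁ * z) = 1 :=
        char_triv h₁0 h₁char (Ideal.mul_mem_right _ _ he₁)
      have step3 : σ₁ (e₁ * z) * σ₂ (e₁ * z) = 1 :=
        htriv' _ (Ideal.mul_mem_left _ _ hz)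
      rw [step1, ← step3, step2, one_mul]
    by_cases hle₁ : 𝔟' ≤ 𝔟₁
    · by_cases hle₂ : 𝔟' ≤ 𝔟₂
      · refine hne (le_antisymm ?_ (Ideal.dvd_iff_le.mp hdvd))
        rw [Ideal.mul_eq_inf_of_coprime hsuptop]
        exact le_inf hle₁ hle₂
      · refine h₂prim (𝔟₂ ⊔ 𝔟') (Ideal.dvd_iff_le.mpr le_sup_left)
          (fun hEq => hle₂ (by rw [← hEq]; exact le_sup_right)) ?_
        refine isCharModI_of h₂add fun z hz => ?_
        obtain ⟨y, hy, w, hw, rfl⟩ := Submodule.mem_sup.mp hz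
        rw [h₂add, char_triv h₂0 h₂char hy, hσ₂triv w hw, mul_one]
    · refine h₁prim (𝔟₁ ⊔ 𝔟') (Ideal.dvd_iff_le.mpr le_sup_left)
        (fun hEq => hle₁ (by rw [← hEq]; exact le_sup_right)) ?_
      refine isCharModI_of h₁add fun z hz => ?_
      obtain ⟨y, hy, w, hw, rfl⟩ := Submodule.mem_sup.mp hz
      rw [h₁add, char_triv h₁0 h₁char hy, hσ₁triv w hw, mul_one]

/-- The `𝔟₁`-component of a primitive character modulo `𝔟₁ * 𝔟₂` is primitive. -/
lemma primChars_comp {𝔟₁ 𝔟₂ : Ideal (𝓞 K)} (hb₂ : 𝔟₂ ≠ ⊥) {e₁ e₂ : 𝓞 K}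
    (he₁ : e₁ ∈ 𝔟₁) (he₂ : e₂ ∈ 𝔟₂) (hsum : e₁ + e₂ = 1)
    {σ : 𝓞 K → ℂ} (hσ : σ ∈ PrimChars K (𝔟₁ * 𝔟₂)) :
    (fun x => σ (e₂ * x)) ∈ PrimChars K 𝔟₁ := by
  obtain ⟨⟨h0, hadd⟩, hchar, hprim⟩ := hσ
  have h0' : σ (e₂ * 0) = 1 := by rw [mul_zero, h0]
  have hadd' : ∀ x y, σ (e₂ * (x + y)) = σ (e₂ * x) * σ (e₂ * y) := by
    intro x y; rw [mul_add, hadd]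
  refine ⟨⟨h0', hadd'⟩, ?_, ?_⟩
  · refine isCharModI_of hadd' fun z hz => ?_
    have hmem : e₂ * z ∈ 𝔟₁ * 𝔟₂ := by
      rw [mul_comm e₂ z]; exact Ideal.mul_mem_mul hz he₂
    exact char_triv h0 hchar hmem
  · intro 𝔠 hdvd hne hchar'
    refine hprim (𝔠 * 𝔟₂) (mul_dvd_mul_right hdvd 𝔟₂) ?_ ?_
    · intro hEq
      refine hne (mul_right_cancel₀ ?_ hEq)
      simpa [Submodule.zero_eq_bot] using hb₂
    · refine isCharModI_of hadd fun z hz => ?_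
      have hz₂ : z ∈ 𝔟₂ := Ideal.mul_le_right hz
      have hz𝔠 : z ∈ 𝔠 := Ideal.mul_le_left hz
      have hstep : σ z = σ (e₁ * z) * σ (e₂ * z) := by
        rw [← hadd]; congr 1; linear_combination (-z) * hsum
      have h1 : σ (e₁ * z) = 1 :=
        char_triv h0 hchar (Ideal.mul_mem_mul he₁ hz₂)
      have h2 : σ (e₂ * z) = 1 := char_triv h0' hchar' hz𝔠
      rw [hstep, h1, h2, mul_one]


lemma expSum_zero_eq {n : ℕ}
    (c : Fin n → Fin n → (K ≃ₐ[ℚ] K) → (K ≃ₐ[ℚ] K) → 𝓞 K)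
    (𝔟 : Ideal (𝓞 K)) (R : Finset (Fin n → 𝓞 K)) (N : 𝓞 K) :
    expSum c 𝔟 R N (fun _ => (0 : K)) =
      ∑ᶠ σ ∈ PrimChars K 𝔟, ∑ a ∈ R, σ (gqf c a - N) := by
  unfold expSum
  refine finsum_mem_congr rfl fun (σ : 𝓞 K → ℂ) _ =>
    Finset.sum_congr rfl fun (a : Fin n → 𝓞 K) _ => ?_
  simp [psiK]

end AuxLemmas

/-- Let `𝔟 = 𝔟₁ 𝔟₂` with `gcd(N𝔟₁, N𝔟₂) = 1`.  Then
`S_𝔟(N; 0) = S_{𝔟₁}(N; 0) · S_{𝔟₂}(N; 0)`: the complete sum `S_𝔟(N; 0)` is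
multiplicative over norm-coprime factorisations. -/
theorem expSum_multiplicative_at_zero
    (K : Type*) [Field K] [NumberField K] [IsGalois ℚ K] (n : ℕ)
    (c : Fin n → Fin n → (K ≃ₐ[ℚ] K) → (K ≃ₐ[ℚ] K) → 𝓞 K)
    (hsym : ∀ i j τ τ', c i j τ τ' = c j i τ' τ)
    (G : Set (K ≃ₐ[ℚ] K))
    (hG : ∀ i j τ τ', c i j τ τ' ≠ 0 → τ ∈ G ∧ τ' ∈ G)
    (𝔟 𝔟₁ 𝔟₂ : Ideal (𝓞 K)) (h𝔟 : 𝔟 = 𝔟₁ * 𝔟₂) (hb : 𝔟 ≠ ⊥)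
    (hcop : Nat.Coprime (Ideal.absNorm 𝔟₁) (Ideal.absNorm 𝔟₂))
    (R R₁ R₂ : Finset (Fin n → 𝓞 K))
    (hR : ∀ x : Fin n → 𝓞 K, ∃! r, r ∈ R ∧ ∀ i, x i - r i ∈ GIdeal G 𝔟)
    (hR₁ : ∀ x : Fin n → 𝓞 K, ∃! r, r ∈ R₁ ∧ ∀ i, x i - r i ∈ GIdeal G 𝔟₁)
    (hR₂ : ∀ x : Fin n → 𝓞 K, ∃! r, r ∈ R₂ ∧ ∀ i, x i - r i ∈ GIdeal G 𝔟₂)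
    (N : 𝓞 K) :
    expSum c 𝔟 R N (fun _ => (0 : K)) =
      expSum c 𝔟₁ R₁ N (fun _ => (0 : K)) *
        expSum c 𝔟₂ R₂ N (fun _ => (0 : K)) := by
  classical
  have hb₁ : 𝔟₁ ≠ ⊥ := by
    intro h; exact hb (by rw [h𝔟, h]; simp)
  have hb₂ : 𝔟₂ ≠ ⊥ := by
    intro h; exact hb (by rw [h𝔟, h]; simp)
  -- CRT idempotent-like rational integers
  have hexists : ∃ e₁ e₂ : 𝓞 K, e₁ ∈ 𝔟₁ ∧ e₁ ∈ GIdeal G 𝔟₁ ∧ e₂ ∈ 𝔟₂ ∧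
      e₂ ∈ GIdeal G 𝔟₂ ∧ e₁ + e₂ = 1 := by
    obtain ⟨u, v, huv⟩ := Nat.isCoprime_iff_coprime.mpr hcop
    have h₁ : ((u * (Ideal.absNorm 𝔟₁ : ℤ) : ℤ) : 𝓞 K) ∈ 𝔟₁ := by
      push_cast
      exact Ideal.mul_mem_left _ _ (by exact_mod_cast Ideal.absNorm_mem 𝔟₁)
    have h₂ : ((v * (Ideal.absNorm 𝔟₂ : ℤ) : ℤ) : 𝓞 K) ∈ 𝔟₂ := by
      push_cast
      exact Ideal.mul_mem_left _ _ (by exact_mod_cast Ideal.absNorm_mem 𝔟₂)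
    refine ⟨_, _, h₁, intCast_mem_GIdeal h₁, h₂, intCast_mem_GIdeal h₂, ?_⟩
    rw [← Int.cast_add, huv, Int.cast_one]
  obtain ⟨e₁, e₂, he₁, hGe₁, he₂, hGe₂, hsum⟩ := hexists
  have hb21 : 𝔟₂ * 𝔟₁ = 𝔟 := by rw [mul_comm, ← h𝔟]
  have hb12 : 𝔟₁ * 𝔟₂ = 𝔟 := h𝔟.symm
  have hGsub₁ : GIdeal G 𝔟 ≤ GIdeal G 𝔟₁ :=
    GIdeal_mono (by rw [h𝔟]; exact Ideal.mul_le_left)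
  have hGsub₂ : GIdeal G 𝔟 ≤ GIdeal G 𝔟₂ :=
    GIdeal_mono (by rw [h𝔟]; exact Ideal.mul_le_right)
  -- representative maps
  set ρ : (Fin n → 𝓞 K) → (Fin n → 𝓞 K) := fun x => (hR x).choose with hρdef
  have hρmem : ∀ x, ρ x ∈ R := fun x => (hR x).choose_spec.1.1
  have hρcong : ∀ x i, x i - ρ x i ∈ GIdeal G 𝔟 := fun x => (hR x).choose_spec.1.2
  have hρuniq : ∀ x r, r ∈ R → (∀ i, x i - r i ∈ GIdeal G 𝔟) → r = ρ x :=
    fun x r hr hc => (hR x).choose_spec.2 r ⟨hr, hc⟩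
  set ρ₁ : (Fin n → 𝓞 K) → (Fin n → 𝓞 K) := fun x => (hR₁ x).choose with hρ₁def
  have hρ₁mem : ∀ x, ρ₁ x ∈ R₁ := fun x => (hR₁ x).choose_spec.1.1
  have hρ₁cong : ∀ x i, x i - ρ₁ x i ∈ GIdeal G 𝔟₁ := fun x => (hR₁ x).choose_spec.1.2
  have hρ₁uniq : ∀ x r, r ∈ R₁ → (∀ i, x i - r i ∈ GIdeal G 𝔟₁) → r = ρ₁ x :=
    fun x r hr hc => (hR₁ x).choose_spec.2 r ⟨hr, hc⟩
  set ρ₂ : (Fin n → 𝓞 K) → (Fin n → 𝓞 K) := fun x => (hR₂ x).choose with hρ₂def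
  have hρ₂mem : ∀ x, ρ₂ x ∈ R₂ := fun x => (hR₂ x).choose_spec.1.1
  have hρ₂cong : ∀ x i, x i - ρ₂ x i ∈ GIdeal G 𝔟₂ := fun x => (hR₂ x).choose_spec.1.2
  have hρ₂uniq : ∀ x r, r ∈ R₂ → (∀ i, x i - r i ∈ GIdeal G 𝔟₂) → r = ρ₂ x :=
    fun x r hr hc => (hR₂ x).choose_spec.2 r ⟨hr, hc⟩
  -- the mixing map
  set mix : (Fin n → 𝓞 K) → (Fin n → 𝓞 K) → (Fin n → 𝓞 K) :=
    fun a₁ a₂ k => e₂ * a₁ k + e₁ * a₂ k with hmixdef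
  have hmix₁ : ∀ a₁ a₂ k, mix a₁ a₂ k - a₁ k ∈ GIdeal G 𝔟₁ := by
    intro a₁ a₂ k
    have heq : mix a₁ a₂ k - a₁ k = e₁ * (a₂ k - a₁ k) := by
      simp only [hmixdef]
      linear_combination (a₁ k) * hsum
    rw [heq]
    exact Ideal.mul_mem_right _ _ hGe₁
  have hmix₂ : ∀ a₁ a₂ k, mix a₁ a₂ k - a₂ k ∈ GIdeal G 𝔟₂ := by
    intro a₁ a₂ k
    have heq : mix a₁ a₂ k - a₂ k = e₂ * (a₁ k - a₂ k) := by
      simp only [hmixdef]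
      linear_combination (a₂ k) * hsum
    rw [heq]
    exact Ideal.mul_mem_right _ _ hGe₂
  have hmixρ₁ : ∀ a₁ a₂ k, ρ (mix a₁ a₂) k - a₁ k ∈ GIdeal G 𝔟₁ := by
    intro a₁ a₂ k
    have heq : ρ (mix a₁ a₂) k - a₁ k =
        -(mix a₁ a₂ k - ρ (mix a₁ a₂) k) + (mix a₁ a₂ k - a₁ k) := by ring
    rw [heq]
    exact add_mem (neg_mem (hGsub₁ (hρcong _ k))) (hmix₁ a₁ a₂ k)
  have hmixρ₂ : ∀ a₁ a₂ k, ρ (mix a₁ a₂) k - a₂ k ∈ GIdeal G 𝔟₂ := by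
    intro a₁ a₂ k
    have heq : ρ (mix a₁ a₂) k - a₂ k =
        -(mix a₁ a₂ k - ρ (mix a₁ a₂) k) + (mix a₁ a₂ k - a₂ k) := by ring
    rw [heq]
    exact add_mem (neg_mem (hGsub₂ (hρcong _ k))) (hmix₂ a₁ a₂ k)
  -- rewrite the three exponential sums
  rw [expSum_zero_eq, expSum_zero_eq, expSum_zero_eq]
  have hP : (PrimChars K 𝔟).Finite := primChars_finite hb
  have hP₁ : (PrimChars K 𝔟₁).Finite := primChars_finite hb₁
  have hP₂ : (PrimChars K 𝔟₂).Finite := primChars_finite hb₂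
  rw [finsum_mem_eq_finite_toFinset_sum _ hP, finsum_mem_eq_finite_toFinset_sum _ hP₁,
    finsum_mem_eq_finite_toFinset_sum _ hP₂]
  conv_rhs => rw [Finset.sum_mul_sum, ← Finset.sum_product']
  symm
  refine Finset.sum_nbij'
    (i := fun p : (𝓞 K → ℂ) × (𝓞 K → ℂ) => p.1 * p.2)
    (j := fun σ : 𝓞 K → ℂ => ((fun x => σ (e₂ * x)), (fun x => σ (e₁ * x))))
    ?_ ?_ ?_ ?_ ?_
  · -- i maps into P
    rintro ⟨σ₁, σ₂⟩ hp
    rw [Finset.mem_product, Set.Finite.mem_toFinset, Set.Finite.mem_toFinset] at hp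
    rw [Set.Finite.mem_toFinset, ← hb12]
    exact primChars_mul he₁ he₂ hsum hp.1 hp.2
  · -- j maps into P₁ ×ˢ P₂
    intro σ hσ
    rw [Set.Finite.mem_toFinset] at hσ
    rw [Finset.mem_product, Set.Finite.mem_toFinset, Set.Finite.mem_toFinset]
    constructor
    · exact primChars_comp hb₂ he₁ he₂ hsum (by rwa [hb12])
    · exact primChars_comp hb₁ he₂ he₁ (by rw [add_comm]; exact hsum) (by rwa [hb21])
  · -- left inverse
    rintro ⟨σ₁, σ₂⟩ hp
    rw [Finset.mem_product, Set.Finite.mem_toFinset, Set.Finite.mem_toFinset] at hp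
    obtain ⟨⟨⟨h10, h1add⟩, h1char, _⟩, ⟨h20, h2add⟩, h2char, _⟩ := hp
    dsimp only at h10 h1add h1char h20 h2add h2char
    have hx₂ : ∀ x : 𝓞 K, e₂ * x = x + -(e₁ * x) := by
      intro x; linear_combination x * hsum
    have hx₁ : ∀ x : 𝓞 K, e₁ * x = x + -(e₂ * x) := by
      intro x; linear_combination x * hsum
    refine Prod.ext ?_ ?_
    · funext x
      show σ₁ (e₂ * x) * σ₂ (e₂ * x) = σ₁ x
      rw [char_triv h20 h2char (Ideal.mul_mem_right _ _ he₂), mul_one, hx₂ x,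
        h1char x _ (neg_mem (Ideal.mul_mem_right _ _ he₁))]
    · funext x
      show σ₁ (e₁ * x) * σ₂ (e₁ * x) = σ₂ x
      rw [char_triv h10 h1char (Ideal.mul_mem_right _ _ he₁), one_mul, hx₁ x,
        h2char x _ (neg_mem (Ideal.mul_mem_right _ _ he₂))]
  · -- right inverse
    intro σ hσ
    rw [Set.Finite.mem_toFinset] at hσ
    funext x
    show σ (e₂ * x) * σ (e₁ * x) = σ x
    rw [← hσ.1.2]
    congr 1
    linear_combination x * hsum
  · -- the terms agree
    rintro ⟨σ₁, σ₂⟩ hp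
    rw [Finset.mem_product, Set.Finite.mem_toFinset, Set.Finite.mem_toFinset] at hp
    obtain ⟨⟨⟨h10, h1add⟩, h1char, _⟩, ⟨h20, h2add⟩, h2char, _⟩ := hp
    dsimp only at h10 h1add h1char h20 h2add h2char
    show (∑ a₁ ∈ R₁, σ₁ (gqf c a₁ - N)) * (∑ a₂ ∈ R₂, σ₂ (gqf c a₂ - N)) =
      ∑ r ∈ R, (σ₁ * σ₂) (gqf c r - N)
    rw [Finset.sum_mul_sum, ← Finset.sum_product']
    refine Finset.sum_nbij'
      (i := fun q : (Fin n → 𝓞 K) × (Fin n → 𝓞 K) => ρ (mix q.1 q.2))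
      (j := fun r : Fin n → 𝓞 K => (ρ₁ r, ρ₂ r))
      ?_ ?_ ?_ ?_ ?_
    · intro q _; exact hρmem _
    · intro r _
      rw [Finset.mem_product]
      exact ⟨hρ₁mem r, hρ₂mem r⟩
    · -- left inverse on representatives
      rintro ⟨a₁, a₂⟩ hq
      rw [Finset.mem_product] at hq
      refine Prod.ext ?_ ?_
      · exact (hρ₁uniq _ a₁ hq.1 fun k => hmixρ₁ a₁ a₂ k).symm
      · exact (hρ₂uniq _ a₂ hq.2 fun k => hmixρ₂ a₁ a₂ k).symm
    · -- right inverse on representatives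
      intro r hr
      refine (hρuniq _ r hr fun k => ?_).symm
      have hdecomp : mix (ρ₁ r) (ρ₂ r) k - r k =
          e₂ * (ρ₁ r k - r k) + e₁ * (ρ₂ r k - r k) := by
        simp only [hmixdef]
        linear_combination (r k) * hsum
      rw [hdecomp]
      refine add_mem ?_ ?_
      · have h1 : ρ₁ r k - r k ∈ GIdeal G 𝔟₁ := by
          have heq : ρ₁ r k - r k = -(r k - ρ₁ r k) := by ring
          rw [heq]; exact neg_mem (hρ₁cong r k)
        have hmem := GIdeal_mul_mem hGe₂ h1
        rwa [hb21] at hmem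
      · have h2 : ρ₂ r k - r k ∈ GIdeal G 𝔟₂ := by
          have heq : ρ₂ r k - r k = -(r k - ρ₂ r k) := by ring
          rw [heq]; exact neg_mem (hρ₂cong r k)
        have hmem := GIdeal_mul_mem hGe₁ h2
        rwa [hb12] at hmem
    · -- equality of summands
      rintro ⟨a₁, a₂⟩ hq
      show σ₁ (gqf c a₁ - N) * σ₂ (gqf c a₂ - N) =
        (σ₁ * σ₂) (gqf c (ρ (mix a₁ a₂)) - N)
      have hF₁ : gqf c (ρ (mix a₁ a₂)) - gqf c a₁ ∈ 𝔟₁ :=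
        gqf_congr hG fun k => hmixρ₁ a₁ a₂ k
      have hF₂ : gqf c (ρ (mix a₁ a₂)) - gqf c a₂ ∈ 𝔟₂ :=
        gqf_congr hG fun k => hmixρ₂ a₁ a₂ k
      have e1 : σ₁ (gqf c (ρ (mix a₁ a₂)) - N) = σ₁ (gqf c a₁ - N) := by
        have heq : gqf c (ρ (mix a₁ a₂)) - N =
            (gqf c a₁ - N) + (gqf c (ρ (mix a₁ a₂)) - gqf c a₁) := by ring
        rw [heq, h1char _ _ hF₁]
      have e2 : σ₂ (gqf c (ρ (mix a₁ a₂)) - N) = σ₂ (gqf c a₂ - N) := by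
        have heq : gqf c (ρ (mix a₁ a₂)) - N =
            (gqf c a₂ - N) + (gqf c (ρ (mix a₁ a₂)) - gqf c a₂) := by ring
        rw [heq, h2char _ _ hF₂]
      show _ = σ₁ (gqf c (ρ (mix a₁ a₂)) - N) * σ₂ (gqf c (ρ (mix a₁ a₂)) - N)
      rw [e1, e2]
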